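/- Let p_v ≥ 1, d > 0, R ≥ 0 be real numbers and let p_c satisfy 1 − 1/p_v ≤ p_c < 1. If 1/(1+p_v·p_c) < R/d < 1/p_v, then the set of Nash equilibria of the two-miner mining game is exactly { (1,1), (0,0), (g1(R/d), g2(R/d)) }: both miners not participating, both miners participating, and the mixed equilibrium in which miner 1 does not participate with probability g1(R/d) and miner 2 does not participate with probability g2(R/d). -/

import Mathlib

/-- Expected payoff of miner 1; `x1`, `x2` are the probabilities that
miners 1 and 2 do NOT participate in mining. -/
noncomputable def u1 (pv pc d R x1 x2 : ℝ) : ℝ :=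
  (1 - x1) * (x2 * (R - d) +
    (1 - x2) * (1 / (1 + pv * pc)) * (R - d / (1 + pv * pc)))

/-- Expected payoff of miner 2. -/
noncomputable def u2 (pv pc d R x1 x2 : ℝ) : ℝ :=
  (1 - x2) * (x1 * (R - d / pv) +
    (1 - x1) * (pv * pc / (1 + pv * pc)) * (R - d * pc / (1 + pv * pc)))

/-- `p = (x1, x2) ∈ [0,1]²` is a (mixed) Nash equilibrium of the
two-miner mining game. -/
def IsNashEq (pv pc d R : ℝ) (p : ℝ × ℝ) : Prop :=
  p.1 ∈ Set.Icc (0 : ℝ) 1 ∧ p.2 ∈ Set.Icc (0 : ℝ) 1 ∧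
  (∀ y ∈ Set.Icc (0 : ℝ) 1, u1 pv pc d R p.1 p.2 ≥ u1 pv pc d R y p.2) ∧
  (∀ y ∈ Set.Icc (0 : ℝ) 1, u2 pv pc d R p.1 p.2 ≥ u2 pv pc d R p.1 y)

/-- The threshold function `g1`. -/
noncomputable def g1 (pv pc z : ℝ) : ℝ :=
  pv * pc * (z - pc / (1 + pv * pc)) / ((2 * pv * pc + 1) / (pv * (1 + pv * pc)) - z)

/-- The threshold function `g2`. -/
noncomputable def g2 (pv pc z : ℝ) : ℝ :=
  (z - 1 / (1 + pv * pc)) / (pv * pc * ((2 + pv * pc) / (1 + pv * pc) - z))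

/-- Best response characterization for a payoff of the form `(1 - x) * a`. -/
private lemma br_iff (a x : ℝ) (hx0 : 0 ≤ x) (hx1 : x ≤ 1) :
    (∀ y ∈ Set.Icc (0:ℝ) 1, (1 - x) * a ≥ (1 - y) * a) ↔
      ((0 < a → x = 0) ∧ (a < 0 → x = 1)) := by
  constructor
  · intro H
    have h0 := H 0 ⟨le_refl _, zero_le_one⟩
    have h1 := H 1 ⟨zero_le_one, le_refl _⟩
    refine ⟨fun ha => ?_, fun ha => ?_⟩
    · have hx : x ≤ 0 := by nlinarith
      linarith
    · have hx : 1 ≤ x := by nlinarith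
      linarith
  · rintro ⟨h0, h1⟩ y ⟨hy0, hy1⟩
    rcases lt_trichotomy a 0 with ha | ha | ha
    · have hx := h1 ha; subst hx; nlinarith
    · simp [ha]
    · have hx := h0 ha; subst hx; nlinarith

set_option maxHeartbeats 1000000 in
/-- For `1 - 1/pv ≤ pc < 1`: if `1/(1 + pv pc) < R/d < 1/pv`, the Nash
equilibria are exactly `(1,1)`, `(0,0)` and the mixed one
`(g1(R/d), g2(R/d))`. -/
theorem nash_eq_case2_middle_reward
    (pv pc d R : ℝ) (hpv : 1 ≤ pv) (hpc1 : 1 - 1 / pv ≤ pc) (hpc2 : pc < 1)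
    (hd : 0 < d) (hR : 0 ≤ R)
    (h1 : 1 / (1 + pv * pc) < R / d) (h2 : R / d < 1 / pv) :
    {p : ℝ × ℝ | IsNashEq pv pc d R p}
      = {((1 : ℝ), (1 : ℝ)), ((0 : ℝ), (0 : ℝ)),
          (g1 pv pc (R / d), g2 pv pc (R / d))} := by
  have hpv0 : (0:ℝ) < pv := lt_of_lt_of_le one_pos hpv
  have hpc0 : 0 ≤ pc := by
    have h : 1 / pv ≤ 1 := by rw [div_le_one hpv0]; exact hpv
    linarith
  have hq0 : 0 ≤ pv * pc := mul_nonneg hpv0.le hpc0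
  have hq : 0 < pv * pc := by
    rcases hq0.lt_or_eq with h | h
    · exact h
    · exfalso
      have h12 : 1 / (1 + pv * pc) < 1 / pv := h1.trans h2
      rw [← h] at h12
      have hle : 1 / pv ≤ 1 := by rw [div_le_one hpv0]; exact hpv
      norm_num at h12
      rw [one_div] at hle
      linarith
  have hs : (0:ℝ) < 1 + pv * pc := by linarith
  have hps : (0:ℝ) < pv * (1 + pv * pc) := mul_pos hpv0 hs
  have hdz : d < R * (1 + pv * pc) := by
    have := (div_lt_div_iff₀ hs hd).mp h1; linarith
  have hzd : R * pv < d := by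
    have := (div_lt_div_iff₀ hd hpv0).mp h2; linarith
  have hRd : R < d := by nlinarith
  -- basic sign facts
  have hA1 : R - d < 0 := by linarith
  have hB1 : R - d / pv < 0 := by
    rw [sub_neg, lt_div_iff₀ hpv0]; exact hzd
  have hC1pos : 0 < 1 / (1 + pv * pc) * (R - d / (1 + pv * pc)) := by
    apply mul_pos (one_div_pos.mpr hs)
    rw [sub_pos, div_lt_iff₀ hs]; linarith
  have hC2pos : 0 < pv * pc / (1 + pv * pc) * (R - d * pc / (1 + pv * pc)) := by
    apply mul_pos (div_pos hq hs)
    rw [sub_pos, div_lt_iff₀ hs]; nlinarith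
  -- fraction-form denominators are positive
  have hden1 : 0 < (2 * pv * pc + 1) / (pv * (1 + pv * pc)) - R / d := by
    rw [sub_pos, div_lt_div_iff₀ hd hps]
    nlinarith [mul_lt_mul_of_pos_right hzd hs, mul_nonneg hd.le hq0]
  have hden2 : 0 < pv * pc * ((2 + pv * pc) / (1 + pv * pc) - R / d) := by
    apply mul_pos hq
    rw [sub_pos, div_lt_div_iff₀ hd hs]
    nlinarith [mul_le_mul_of_nonneg_left hRd.le hq0]
  -- polynomial-form denominators
  have hden1' : 0 < (2 * pv * pc + 1) * d - R * (pv * (1 + pv * pc)) := by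
    nlinarith [mul_lt_mul_of_pos_right hzd hs, mul_nonneg hd.le hq0]
  have hden2' : 0 < pv * pc * ((2 + pv * pc) * d - R * (1 + pv * pc)) := by
    apply mul_pos hq
    nlinarith [mul_le_mul_of_nonneg_left hRd.le hq0]
  -- polynomial forms of g1, g2
  have hg1eq : g1 pv pc (R / d) =
      pv * pc * (R * (pv * (1 + pv * pc)) - pc * pv * d) /
        ((2 * pv * pc + 1) * d - R * (pv * (1 + pv * pc))) := by
    unfold g1
    rw [div_eq_div_iff (ne_of_gt hden1) (ne_of_gt hden1')]
    field_simp
  have hg2eq : g2 pv pc (R / d) =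
      (R * (1 + pv * pc) - d) /
        (pv * pc * ((2 + pv * pc) * d - R * (1 + pv * pc))) := by
    unfold g2
    rw [div_eq_div_iff (ne_of_gt hden2) (ne_of_gt hden2')]
    field_simp
  -- bounds on g1, g2
  have hg1pos : 0 < g1 pv pc (R / d) := by
    rw [hg1eq]
    apply div_pos _ hden1'
    apply mul_pos hq
    nlinarith [mul_lt_mul_of_pos_left hdz hpv0,
      mul_lt_mul_of_pos_right hpc2 (mul_pos hpv0 hd)]
  have hg1lt1 : g1 pv pc (R / d) < 1 := by
    rw [hg1eq, div_lt_one hden1']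
    nlinarith [mul_lt_mul_of_pos_right (mul_lt_mul_of_pos_right hzd hs) hs]
  have hg2pos : 0 < g2 pv pc (R / d) := by
    rw [hg2eq]
    exact div_pos (by linarith) hden2'
  have hg2lt1 : g2 pv pc (R / d) < 1 := by
    rw [hg2eq, div_lt_one hden2']
    nlinarith [mul_lt_mul_of_pos_right (mul_lt_mul_of_pos_right hRd hs) hs]
  -- the indifference identities
  have hAg2 : (g2 pv pc (R / d)) * (R - d) +
      (1 - g2 pv pc (R / d)) * (1 / (1 + pv * pc)) * (R - d / (1 + pv * pc)) = 0 := by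
    rw [hg2eq]
    have hpcne : pc ≠ 0 := by rintro rfl; simp at hq
    have hX2 : (2 + pv * pc) * d - R * (1 + pv * pc) ≠ 0 := by
      intro h; rw [h] at hden2'; simp at hden2'
    have hX1 : (2 * pv * pc + 1) * d - R * (pv * (1 + pv * pc)) ≠ 0 := ne_of_gt hden1'
    have hpvne : pv ≠ 0 := ne_of_gt hpv0
    have hsne : 1 + pv * pc ≠ 0 := ne_of_gt hs
    generalize hD : (2 + pv * pc) * d - R * (1 + pv * pc) = D at hX2 ⊢
    field_simp
    subst hD
    ring
  have hBg1 : (g1 pv pc (R / d)) * (R - d / pv) +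
      (1 - g1 pv pc (R / d)) * (pv * pc / (1 + pv * pc)) * (R - d * pc / (1 + pv * pc)) = 0 := by
    rw [hg1eq]
    have hpcne : pc ≠ 0 := by rintro rfl; simp at hq
    have hX2 : (2 + pv * pc) * d - R * (1 + pv * pc) ≠ 0 := by
      intro h; rw [h] at hden2'; simp at hden2'
    have hX1 : (2 * pv * pc + 1) * d - R * (pv * (1 + pv * pc)) ≠ 0 := ne_of_gt hden1'
    have hpvne : pv ≠ 0 := ne_of_gt hpv0
    have hsne : 1 + pv * pc ≠ 0 := ne_of_gt hs
    generalize hD : (2 * pv * pc + 1) * d - R * (pv * (1 + pv * pc)) = D at hX1 ⊢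
    field_simp
    subst hD
    ring
  -- uniqueness of the indifference points
  have huniq2 : ∀ t : ℝ,
      t * (R - d) + (1 - t) * (1 / (1 + pv * pc)) * (R - d / (1 + pv * pc)) = 0 →
      t = g2 pv pc (R / d) := by
    intro t ht
    have hslope : (R - d) - 1 / (1 + pv * pc) * (R - d / (1 + pv * pc)) < 0 := by linarith
    have hkey : (t - g2 pv pc (R / d)) *
        ((R - d) - 1 / (1 + pv * pc) * (R - d / (1 + pv * pc))) = 0 := by
      linear_combination ht - hAg2
    rcases mul_eq_zero.mp hkey with h | h
    · exact sub_eq_zero.mp h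
    · linarith
  have huniq1 : ∀ t : ℝ,
      t * (R - d / pv) + (1 - t) * (pv * pc / (1 + pv * pc)) * (R - d * pc / (1 + pv * pc)) = 0 →
      t = g1 pv pc (R / d) := by
    intro t ht
    have hslope : (R - d / pv) -
        pv * pc / (1 + pv * pc) * (R - d * pc / (1 + pv * pc)) < 0 := by linarith
    have hkey : (t - g1 pv pc (R / d)) *
        ((R - d / pv) - pv * pc / (1 + pv * pc) * (R - d * pc / (1 + pv * pc))) = 0 := by
      linear_combination ht - hBg1
    rcases mul_eq_zero.mp hkey with h | h
    · exact sub_eq_zero.mp h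
    · linarith
  -- main set equality
  ext ⟨x1, x2⟩
  simp only [Set.mem_setOf_eq, Set.mem_insert_iff, Set.mem_singleton_iff, Prod.mk.injEq,
    IsNashEq]
  constructor
  · rintro ⟨⟨hx10, hx11⟩, ⟨hx20, hx21⟩, H1, H2⟩
    simp only [u1] at H1
    simp only [u2] at H2
    rw [br_iff _ _ hx10 hx11] at H1
    rw [br_iff _ _ hx20 hx21] at H2
    rcases lt_trichotomy (x2 * (R - d) +
        (1 - x2) * (1 / (1 + pv * pc)) * (R - d / (1 + pv * pc))) 0 with hA | hA | hA
    · -- miner 1 strictly prefers not to participate: x1 = 1, then x2 = 1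
      have hx1 : x1 = 1 := H1.2 hA
      subst hx1
      have hBneg : (1:ℝ) * (R - d / pv) +
          (1 - 1) * (pv * pc / (1 + pv * pc)) * (R - d * pc / (1 + pv * pc)) < 0 := by
        nlinarith [hB1]
      exact Or.inl ⟨rfl, H2.2 hBneg⟩
    · -- indifference: mixed equilibrium
      have hx2 : x2 = g2 pv pc (R / d) := huniq2 x2 hA
      subst hx2
      have hBn0 : ¬ (0 < x1 * (R - d / pv) +
          (1 - x1) * (pv * pc / (1 + pv * pc)) * (R - d * pc / (1 + pv * pc))) := by
        intro h
        have := H2.1 h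
        linarith [hg2pos]
      have hBn1 : ¬ (x1 * (R - d / pv) +
          (1 - x1) * (pv * pc / (1 + pv * pc)) * (R - d * pc / (1 + pv * pc)) < 0) := by
        intro h
        have := H2.2 h
        linarith [hg2lt1]
      have hB0 : x1 * (R - d / pv) +
          (1 - x1) * (pv * pc / (1 + pv * pc)) * (R - d * pc / (1 + pv * pc)) = 0 := by
        rcases lt_trichotomy (x1 * (R - d / pv) +
          (1 - x1) * (pv * pc / (1 + pv * pc)) * (R - d * pc / (1 + pv * pc))) 0 with h | h | h
        · exact absurd h hBn1
        · exact h
        · exact absurd h hBn0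
      exact Or.inr (Or.inr ⟨huniq1 x1 hB0, rfl⟩)
    · -- miner 1 strictly prefers to participate: x1 = 0, then x2 = 0
      have hx1 : x1 = 0 := H1.1 hA
      subst hx1
      have hBpos : 0 < (0:ℝ) * (R - d / pv) +
          (1 - 0) * (pv * pc / (1 + pv * pc)) * (R - d * pc / (1 + pv * pc)) := by
        nlinarith [hC2pos]
      exact Or.inr (Or.inl ⟨rfl, H2.1 hBpos⟩)
  · intro h
    rcases h with ⟨h1', h2'⟩ | ⟨h1', h2'⟩ | ⟨h1', h2'⟩ <;> subst h1' <;> subst h2'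
    · refine ⟨⟨zero_le_one, le_refl 1⟩, ⟨zero_le_one, le_refl 1⟩, ?_, ?_⟩
      · simp only [u1]
        exact (br_iff _ _ zero_le_one (le_refl 1)).mpr
          ⟨fun h => by linarith, fun _ => rfl⟩
      · simp only [u2]
        exact (br_iff _ _ zero_le_one (le_refl 1)).mpr
          ⟨fun h => by linarith, fun _ => rfl⟩
    · refine ⟨⟨le_refl 0, zero_le_one⟩, ⟨le_refl 0, zero_le_one⟩, ?_, ?_⟩
      · simp only [u1]
        exact (br_iff _ _ (le_refl 0) zero_le_one).mpr
          ⟨fun _ => rfl, fun h => by linarith⟩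
      · simp only [u2]
        exact (br_iff _ _ (le_refl 0) zero_le_one).mpr
          ⟨fun _ => rfl, fun h => by linarith⟩
    · refine ⟨⟨hg1pos.le, hg1lt1.le⟩, ⟨hg2pos.le, hg2lt1.le⟩, ?_, ?_⟩
      · simp only [u1]
        refine (br_iff _ _ hg1pos.le hg1lt1.le).mpr ⟨fun h => ?_, fun h => ?_⟩
        · rw [hAg2] at h; exact absurd h (lt_irrefl 0)
        · rw [hAg2] at h; exact absurd h (lt_irrefl 0)
      · simp only [u2]
        refine (br_iff _ _ hg2pos.le hg2lt1.le).mpr ⟨fun h => ?_, fun h => ?_⟩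
        · rw [hBg1] at h; exact absurd h (lt_irrefl 0)
        · rw [hBg1] at h; exact absurd h (lt_irrefl 0)
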